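/- arXiv:2107.02206 — 3 statements merged into one kernel-verified Lean document; each statement's English description precedes it below -/
import Mathlib

section
/- Let v'v'' be an edge of Γ, and let V', V'' be the vertex sets of the two connected components of Γ with this edge removed, where v' ∈ V' and v'' ∈ V''. Let ∅ ≠ J ⊆ V'' and let π_J : ℚ^V → ℚ^J be the coordinate projection. In the group ring ℤ[ℚ^J] there exists an element P whose (finite) support is contained in π_J(S') such that (1 − t^{π_J(E*_{v''})}) · ∏_{v∈V', δ_v ≥ 2}(1 − t^{π_J(E*_v)})^{δ_v − 2} = P · ∏_{v∈V', δ_v = 1}(1 − t^{π_J(E*_v)}); here δ_v denotes the valency of v in the whole tree Γ. Equivalently, (1 − t_J^{E*_{v''}}) · ∏_{v∈V'}(1 − t_J^{E*_v})^{δ_v − 2} is a Laurent polynomial supported on π_J(S'). -/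
open Classical

attribute [local instance 10] Classical.propDecidable

noncomputable section

namespace SWpaper

variable {V : Type} [Fintype V] [DecidableEq V]

/-- The intersection matrix of a tree with integer vertex weights `b`:
diagonal entries `b v`, off-diagonal entries `1` for adjacent vertices, `0` otherwise. -/
def imat (G : SimpleGraph V) (b : V → ℤ) : Matrix V V ℚ :=
  Matrix.of fun u v => if u = v then (b u : ℚ) else if G.Adj u v then 1 else 0

/-- Negative definiteness of a rational matrix. -/
def NegDef (M : Matrix V V ℚ) : Prop :=
  ∀ x : V → ℚ, x ≠ 0 → dotProduct x (M.mulVec x) < 0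

/-- The intersection pairing `(x, y) = xᵀ I y`. -/
def pairing (G : SimpleGraph V) (b : V → ℤ) (x y : V → ℚ) : ℚ :=
  dotProduct x ((imat G b).mulVec y)

/-- The dual base element `E*_v`, the `v`-th column of `-(imat G b)⁻¹`. -/
def Estar (G : SimpleGraph V) (b : V → ℤ) (v : V) : V → ℚ :=
  fun u => -((imat G b)⁻¹ u v)

/-- The `E*`-coordinates of `x`: `coeff G b x v = -(x, E_v)`. -/
def coeff (G : SimpleGraph V) (b : V → ℤ) (x : V → ℚ) : V → ℚ :=
  fun v => -((imat G b).mulVec x v)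

/-- Valency of a vertex. -/
def deg (G : SimpleGraph V) (v : V) : ℕ := (G.neighborSet v).ncard

/-- Generalized binomial coefficient `C(d, n) = d(d-1)⋯(d-n+1)/n!` for `d : ℤ`, `n : ℕ`. -/
def qchoose (d : ℤ) (n : ℕ) : ℚ :=
  (∏ i ∈ Finset.range n, ((d : ℚ) - (i : ℚ))) / (Nat.factorial n : ℚ)

/-- The natural number represented by a rational (its numerator, truncated). -/
def natOf (q : ℚ) : ℕ := q.num.toNat

/-- All values of `x` are nonnegative integers. -/
def IsNatVec {α : Type*} (x : α → ℚ) : Prop := ∀ v, ∃ n : ℕ, x v = (n : ℚ)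

/-- All values of `x` are integers. -/
def IsIntVec {α : Type*} (x : α → ℚ) : Prop := ∀ v, ∃ n : ℤ, x v = (n : ℚ)

/-- The coefficient `z(x)` of the topological Poincaré series
`Z(t) = ∏_v (1 - t^{E*_v})^{δ_v - 2}`. -/
def zcoef (G : SimpleGraph V) (b : V → ℤ) (x : V → ℚ) : ℚ :=
  if IsNatVec (coeff G b x) then
    ∏ v, (-1 : ℚ) ^ natOf (coeff G b x v) *
      qchoose ((deg G v : ℤ) - 2) (natOf (coeff G b x v))
  else 0

/-- The coefficient `r(x)` of the relative series
`R(t) = ∏_v (1 - t^{E*_v})^{δ_v - 2 + a_v}`. -/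
def rcoef (G : SimpleGraph V) (b : V → ℤ) (a : V → ℕ) (x : V → ℚ) : ℚ :=
  if IsNatVec (coeff G b x) then
    ∏ v, (-1 : ℚ) ^ natOf (coeff G b x v) *
      qchoose ((deg G v : ℤ) - 2 + (a v : ℤ)) (natOf (coeff G b x v))
  else 0

/-- Membership in the Lipman cone `S'`. -/
def memS' (G : SimpleGraph V) (b : V → ℤ) (x : V → ℚ) : Prop :=
  ∃ a : V → ℕ, x = ∑ v, (a v : ℚ) • Estar G b v

/-- Membership in the interior `int S'`. -/
def memIntS' (G : SimpleGraph V) (b : V → ℤ) (x : V → ℚ) : Prop :=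
  ∃ a : V → ℚ, (∀ v, 0 < a v) ∧ x = ∑ v, a v • Estar G b v

/-- Membership in the dual lattice `L'`. -/
def memL' (G : SimpleGraph V) (b : V → ℤ) (x : V → ℚ) : Prop :=
  ∃ a : V → ℤ, x = ∑ v, (a v : ℚ) • Estar G b v

/-- `x` and `y` have the same class in `H = L'/L`, i.e. differ by an integral vector. -/
def SameClass (x y : V → ℚ) : Prop := ∀ v, ∃ n : ℤ, x v - y v = (n : ℚ)

/-- Coordinatewise fractional part: the representative `r_{[x]}` with entries in `[0,1)`. -/
def fracPart (x : V → ℚ) : V → ℚ := fun v => Int.fract (x v)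

/-- The anticanonical cycle `Z_K`, determined by `(Z_K, E_v) = b v + 2` for all `v`. -/
def ZK (G : SimpleGraph V) (b : V → ℤ) : V → ℚ :=
  ((imat G b)⁻¹).mulVec (fun v => (b v : ℚ) + 2)

/-- The Riemann–Roch function `χ(x) = -(x, x - Z_K)/2`. -/
def chi (G : SimpleGraph V) (b : V → ℤ) (x : V → ℚ) : ℚ :=
  -(pairing G b x (x - ZK G b)) / 2

/-- The counting function `Q_{[x]}(x) = ∑_{y ∈ S', [y] = [x], y ≱ x} z(y)` (a finite sum). -/
def Q (G : SimpleGraph V) (b : V → ℤ) (x : V → ℚ) : ℚ :=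
  ∑ᶠ y ∈ {y : V → ℚ | memS' G b y ∧ SameClass y x ∧ ¬ x ≤ y}, zcoef G b y

/-- `c` is the normalized Seiberg–Witten invariant of the class `[x0]`:
`c = Q_{[x]}(x) - χ(x) + χ(r_{[x]})` for every `x ∈ (Z_K + int S') ∩ L'` with `[x] = [x0]`. -/
def IsSWat (G : SimpleGraph V) (b : V → ℤ) (x0 : V → ℚ) (c : ℚ) : Prop :=
  ∀ x : V → ℚ, memL' G b x → SameClass x x0 →
    (∃ y, memIntS' G b y ∧ x = ZK G b + y) →
    c = Q G b x - chi G b x + chi G b (fracPart x)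

/-- The virtual cohomology number `h¹_virt(x) = -Q_{[x]}(x) + χ(x) - χ(r_{[x]}) + sw_{[x]}`. -/
def h1virt (G : SimpleGraph V) (b : V → ℤ) (sw : (V → ℚ) → ℚ) (x : V → ℚ) : ℚ :=
  - Q G b x + chi G b x - chi G b (fracPart x) + sw x


/-- The base vector `E_v` as an element of `ℚ^V`. -/
def Epi (v : V) : V → ℚ := Pi.single v 1

/-- The branch of the vertex `v` containing `u`: the connected component of `u`
in the graph obtained from `G` by deleting `v`. -/
def branchSet (G : SimpleGraph V) (v u : V) : Set V :=
  {w : V | ∃ (hw : w ≠ v) (hu : u ≠ v),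
    (G.induce {x : V | x ≠ v}).Reachable ⟨w, hw⟩ ⟨u, hu⟩}

/-- The monomial conditions for `(G, b)`. -/
def MonomialCond (G : SimpleGraph V) (b : V → ℤ) : Prop :=
  ∀ n : V, 3 ≤ deg G n → ∀ u ∈ G.neighborSet n,
    ∃ a : V → ℕ,
      (∀ w, a w ≠ 0 → deg G w = 1 ∧ w ∈ branchSet G n u) ∧
      IsNatVec (fun w => (∑ x, (a x : ℚ) • Estar G b x - Estar G b n) w) ∧
      (∀ w, w ∉ branchSet G n u → (∑ x, (a x : ℚ) • Estar G b x - Estar G b n) w = 0)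

/-- Characteristic vector of a finite set of vertices. -/
def EFset (F : Finset V) : V → ℚ := fun u => if u ∈ F then 1 else 0

/-- The lattice weight `w(x, I) = max_{F ⊆ I} χ(x + E_F)`. -/
def wfun (G : SimpleGraph V) (b : V → ℤ) (x : V → ℚ) (I : Finset V) : ℚ :=
  I.powerset.sup' ⟨∅, Finset.empty_mem_powerset I⟩ (fun F => chi G b (x + EFset F))

/-- The weighted Euler characteristic `χ_w(R(a, bb))` of the rectangle `R(a, bb)`. -/
def chiw (G : SimpleGraph V) (b : V → ℤ) (a bb : V → ℚ) : ℚ :=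
  ∑ᶠ p ∈ {p : (V → ℚ) × Finset V | SameClass p.1 a ∧ a ≤ p.1 ∧ p.1 + EFset p.2 ≤ bb},
    (-1 : ℚ) ^ (p.2.card + 1) * wfun G b p.1 p.2

/-- `V_w`: the set of vertices `u` such that every walk from `u` to `v₀` passes through `w`. -/
def Vw (G : SimpleGraph V) (v₀ w : V) : Set V :=
  {u : V | ∀ p : G.Walk u v₀, w ∈ p.support}

/-- `w` as an element of `V_w`. -/
def wElem (G : SimpleGraph V) (v₀ w : V) : ↥(Vw G v₀ w) :=
  ⟨w, fun p => p.start_mem_support⟩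

/-- The dual operator `j*_w : L' → L'(Γ_w)`, sending `E*_u ↦ E*_u(Γ_w)` for `u ∈ V_w`
and `E*_u ↦ 0` otherwise. -/
def jdual (G : SimpleGraph V) (b : V → ℤ) (v₀ w : V) (x : V → ℚ) : ↥(Vw G v₀ w) → ℚ :=
  ∑ u : ↥(Vw G v₀ w),
    coeff G b x u.1 • Estar (G.induce (Vw G v₀ w)) (fun t => b t.1) u

/-- `r^{Γ_w}(y) = z^{Γ_w}(y) - z^{Γ_w}(y - E*_w(Γ_w))`. -/
def rGw (G : SimpleGraph V) (b : V → ℤ) (v₀ w : V) (y : ↥(Vw G v₀ w) → ℚ) : ℚ :=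
  zcoef (G.induce (Vw G v₀ w)) (fun t => b t.1) y -
    zcoef (G.induce (Vw G v₀ w)) (fun t => b t.1)
      (y - Estar (G.induce (Vw G v₀ w)) (fun t => b t.1) (wElem G v₀ w))

/-- `C(w, x) = ∑_{l ∈ L(Γ_w), l ≥ 0, l_w = 0} r^{Γ_w}(j*_w(x) + l)` (a finite sum). -/
def Cfun (G : SimpleGraph V) (b : V → ℤ) (v₀ w : V) (x : V → ℚ) : ℚ :=
  ∑ᶠ l ∈ {l : ↥(Vw G v₀ w) → ℚ | IsNatVec l ∧ l (wElem G v₀ w) = 0},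
    rGw G b v₀ w (jdual G b v₀ w x + l)

end SWpaper

namespace SWpaper

open AddMonoidAlgebra Pointwise
set_option linter.unusedSectionVars false
set_option maxHeartbeats 1000000

section AuxAlgebra

variable {A : Type} [AddCommMonoid A]

lemma onesub_addA (a c : A) :
    (1 : AddMonoidAlgebra ℤ A) - single (a + c) 1
      = (1 - single a 1) + single a 1 * (1 - single c 1) := by
  rw [mul_sub, mul_one, single_mul_single, mul_one]
  ring

lemma geomA (a : A) (n : ℕ) :
    (1 : AddMonoidAlgebra ℤ A) - single (n • a) 1
      = (1 - single a 1) * ∑ k ∈ Finset.range n, single (k • a) 1 := by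
  induction n with
  | zero => simp [← AddMonoidAlgebra.one_def]
  | succ n ih =>
    rw [Finset.sum_range_succ, mul_add, ← ih, succ_nsmul, add_comm (n • a) a, onesub_addA a (n • a),
      sub_mul, one_mul, single_mul_single, mul_one, add_comm a (n • a)]
    ring_nf
    rw [single_mul_single, mul_one, add_comm a (n • a)]

lemma onesub_sumA {ι : Type} [DecidableEq ι] (s : Finset ι) (g : ι → A) :
    ∃ e : ι → AddMonoidAlgebra ℤ A,
      (∀ i ∈ s, ∃ t : Finset ι, t ⊆ s.erase i ∧ e i = ∏ j ∈ t, single (g j) 1) ∧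
      (1 : AddMonoidAlgebra ℤ A) - single (∑ i ∈ s, g i) 1
        = ∑ i ∈ s, e i * (1 - single (g i) 1) := by
  induction s using Finset.induction_on with
  | empty => exact ⟨fun _ => 1, by simp, by simp [← AddMonoidAlgebra.one_def]⟩
  | @insert a s ha ih =>
    obtain ⟨e, he, heq⟩ := ih
    refine ⟨fun i => if i = a then 1 else single (g a) 1 * e i, ?_, ?_⟩
    · intro i hi
      rcases Finset.mem_insert.1 hi with rfl | hi
      · exact ⟨∅, by simp, by simp⟩
      · obtain ⟨t, hts, het⟩ := he i hi
        have hia : i ≠ a := fun h => ha (h ▸ hi)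
        refine ⟨insert a t, ?_, ?_⟩
        · intro x hx
          rcases Finset.mem_insert.1 hx with rfl | hx
          · exact Finset.mem_erase.2 ⟨fun h => hia h.symm, Finset.mem_insert_self _ _⟩
          · have := hts hx
            rw [Finset.mem_erase] at this ⊢
            exact ⟨this.1, Finset.mem_insert_of_mem this.2⟩
        · have hat : a ∉ t := fun h => ha (Finset.mem_of_mem_erase (hts h))
          simp only [if_neg hia]
          rw [Finset.prod_insert hat, het]
    · rw [Finset.sum_insert ha, Finset.sum_insert ha, onesub_addA (g a) (∑ i ∈ s, g i), heq,
        Finset.mul_sum]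
      simp only [eq_self_iff_true, if_true, one_mul]
      congr 1
      refine Finset.sum_congr rfl fun i hi => ?_
      have : i ≠ a := fun h => ha (h ▸ hi)
      rw [if_neg this, mul_assoc]

end AuxAlgebra

section AuxGraph

variable {V : Type} [Fintype V] [DecidableEq V] {G : SimpleGraph V}

lemma bridge_no_reach (hT : G.IsTree) {u w : V} (h : G.Adj u w) :
    ¬ (G.deleteEdges {s(u,w)}).Reachable u w := by
  have := (SimpleGraph.isAcyclic_iff_forall_adj_isBridge.1 hT.2) h
  rw [SimpleGraph.isBridge_iff] at this
  exact this

lemma reach_or (hT : G.IsTree) {u w : V} (h : G.Adj u w) (x : V) :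
    (G.deleteEdges {s(u,w)}).Reachable x u ∨ (G.deleteEdges {s(u,w)}).Reachable x w := by
  obtain ⟨p⟩ := (hT.1.preconnected x u)
  induction p with
  | nil => exact Or.inl (SimpleGraph.Reachable.refl _)
  | @cons a c u h' q ih =>
    by_cases hac : s(a, c) = s(u, w)
    · rw [Sym2.eq_iff] at hac
      rcases hac with ⟨rfl, rfl⟩ | ⟨rfl, rfl⟩
      · exact Or.inl (SimpleGraph.Reachable.refl _)
      · exact Or.inr (SimpleGraph.Reachable.refl _)
    · have hadj : (G.deleteEdges {s(u,w)}).Adj a c := by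
        rw [SimpleGraph.deleteEdges_adj]
        exact ⟨h', by simpa using hac⟩
      rcases ih h with h1 | h1
      · exact Or.inl (hadj.reachable.trans h1)
      · exact Or.inr (hadj.reachable.trans h1)

lemma transfer_walk {e : Sym2 V} {x y : V} (p : (G.deleteEdges {e}).Walk x y)
    {e' : Sym2 V} (he' : e' ∉ p.edges) :
    (G.deleteEdges {e'}).Reachable x y := by
  refine ⟨p.transfer _ fun f hf => ?_⟩
  have h1 : f ∈ (G.deleteEdges {e}).edgeSet := p.edges_subset_edgeSet hf
  rw [SimpleGraph.edgeSet_deleteEdges] at h1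
  rw [SimpleGraph.edgeSet_deleteEdges]
  exact ⟨h1.1, by rintro rfl; exact he' hf⟩

lemma u_not_in_walk (hT : G.IsTree) {t u x : V} (h : G.Adj t u)
    (p : (G.deleteEdges {s(t,u)}).Walk x t) : u ∉ p.support := by
  intro hu
  have := p.dropUntil u hu
  exact bridge_no_reach hT h ⟨this.reverse⟩

lemma sym2_ne {t u w : V} (htu : t ≠ u) (htw : t ≠ w) : s(t,u) ≠ s(u,w) := by
  intro h
  rw [Sym2.eq_iff] at h
  rcases h with ⟨rfl, rfl⟩ | ⟨rfl, -⟩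
  · exact htu rfl
  · exact htw rfl

lemma reach_subset (hT : G.IsTree) {u w t : V} (huw : G.Adj u w) (hut : G.Adj u t)
    (htw : t ≠ w) {x : V} (hx : (G.deleteEdges {s(t,u)}).Reachable x t) :
    (G.deleteEdges {s(u,w)}).Reachable x u := by
  obtain ⟨p⟩ := hx
  have hu : u ∉ p.support := u_not_in_walk hT hut.symm p
  have h1 : (G.deleteEdges {s(u,w)}).Reachable x t :=
    transfer_walk p (fun he => hu (p.fst_mem_support_of_mem_edges he))
  refine h1.trans (SimpleGraph.Adj.reachable ?_)
  rw [SimpleGraph.deleteEdges_adj]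
  exact ⟨hut.symm, by simpa using sym2_ne hut.ne' htw⟩

lemma reach_disjoint (hT : G.IsTree) {u t1 t2 : V} (h1 : G.Adj u t1) (h2 : G.Adj u t2)
    (h12 : t1 ≠ t2) {x : V} (hx1 : (G.deleteEdges {s(t1,u)}).Reachable x t1)
    (hx2 : (G.deleteEdges {s(t2,u)}).Reachable x t2) : False := by
  obtain ⟨p⟩ := hx2
  have hu : u ∉ p.support := u_not_in_walk hT h2.symm p
  have hxt2 : (G.deleteEdges {s(t1,u)}).Reachable x t2 :=
    transfer_walk p (fun he => hu (p.snd_mem_support_of_mem_edges he))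
  have hadj : (G.deleteEdges {s(t1,u)}).Adj t2 u := by
    rw [SimpleGraph.deleteEdges_adj]
    refine ⟨h2.symm, by
      simp only [Set.mem_singleton_iff]
      intro h
      rw [Sym2.eq_iff] at h
      rcases h with ⟨rfl, -⟩ | ⟨h1', -⟩
      · exact h12 rfl
      · exact h2.ne' h1'⟩
  exact bridge_no_reach hT h1.symm ((hx1.symm.trans (hxt2.trans hadj.reachable)))

lemma reach_cover (hT : G.IsTree) {u w x : V} (huw : G.Adj u w)
    (hx : (G.deleteEdges {s(u,w)}).Reachable x u) (hxu : x ≠ u) :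
    ∃ t, G.Adj u t ∧ t ≠ w ∧ (G.deleteEdges {s(t,u)}).Reachable x t := by
  obtain ⟨p0⟩ := hx.symm
  obtain ⟨p, hp⟩ := p0.toPath
  cases p with
  | nil => exact absurd rfl hxu.symm
  | @cons a t c h' q =>
    rw [SimpleGraph.Walk.cons_isPath_iff] at hp
    rw [SimpleGraph.deleteEdges_adj] at h'
    have htw : t ≠ w := by
      intro h; subst h; simpa using h'.2
    refine ⟨t, h'.1, htw, ?_⟩
    have hu : u ∉ q.reverse.support := by
      rw [SimpleGraph.Walk.support_reverse]; simpa using hp.2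
    exact transfer_walk q.reverse
      (fun he => hu (q.reverse.snd_mem_support_of_mem_edges he))

def CF (G : SimpleGraph V) (u w : V) : Finset V :=
  Finset.univ.filter fun x => (G.deleteEdges {s(u,w)}).Reachable x u

lemma mem_CF {G : SimpleGraph V} {u w x : V} :
    x ∈ CF G u w ↔ (G.deleteEdges {s(u,w)}).Reachable x u := by
  simp [CF]

lemma u_mem_CF {u w : V} : u ∈ CF G u w := mem_CF.2 (SimpleGraph.Reachable.refl _)

lemma u_not_mem_CF (hT : G.IsTree) {u t : V} (h : G.Adj u t) : u ∉ CF G t u := by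
  rw [mem_CF]
  intro hr
  exact bridge_no_reach hT h.symm hr.symm

lemma CF_subset (hT : G.IsTree) {u w t : V} (huw : G.Adj u w) (hut : G.Adj u t)
    (htw : t ≠ w) : CF G t u ⊆ CF G u w := by
  intro x hx
  exact mem_CF.2 (reach_subset hT huw hut htw (mem_CF.1 hx))

lemma CF_decomp (hT : G.IsTree) {u w : V} (huw : G.Adj u w) :
    CF G u w = insert u (((G.neighborFinset u).erase w).biUnion fun t => CF G t u) := by
  apply Finset.ext
  intro x
  simp only [Finset.mem_insert, Finset.mem_biUnion, Finset.mem_erase,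
    SimpleGraph.mem_neighborFinset]
  constructor
  · intro hx
    by_cases hxu : x = u
    · exact Or.inl hxu
    · obtain ⟨t, h1, h2, h3⟩ := reach_cover hT huw (mem_CF.1 hx) hxu
      exact Or.inr ⟨t, ⟨h2, h1⟩, mem_CF.2 h3⟩
  · rintro (rfl | ⟨t, ⟨htw, hut⟩, hx⟩)
    · exact u_mem_CF
    · exact CF_subset hT huw hut htw hx

lemma CF_pairwise (hT : G.IsTree) {u w : V} :
    (↑((G.neighborFinset u).erase w) : Set V).PairwiseDisjoint
      (fun t => CF G t u) := by
  intro t1 h1 t2 h2 h12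
  simp only [Finset.coe_erase, Set.mem_diff, Finset.mem_coe,
    SimpleGraph.mem_neighborFinset] at h1 h2
  rw [Function.onFun, Finset.disjoint_left]
  intro x hx1 hx2
  exact reach_disjoint hT h1.1 h2.1 h12 (mem_CF.1 hx1) (mem_CF.1 hx2)

lemma prod_CF_split {M : Type} [CommMonoid M] (hT : G.IsTree) {u w : V}
    (huw : G.Adj u w) (F : V → M) :
    ∏ v ∈ CF G u w, F v
      = F u * ∏ t ∈ (G.neighborFinset u).erase w, ∏ v ∈ CF G t u, F v := by
  rw [CF_decomp hT huw, Finset.prod_insert, Finset.prod_biUnion (CF_pairwise hT)]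
  intro hmem
  rw [Finset.mem_biUnion] at hmem
  obtain ⟨t, ht, hu⟩ := hmem
  rw [Finset.mem_erase, SimpleGraph.mem_neighborFinset] at ht
  exact u_not_mem_CF hT ht.2 hu

lemma deg_eq {v : V} : deg G v = (G.neighborFinset v).card := by
  unfold deg
  rw [← Set.ncard_coe_finset]
  congr 1
  ext x
  simp [SimpleGraph.mem_neighborFinset]

end AuxGraph

section AuxMatrix

variable {V : Type} [Fintype V] [DecidableEq V] {G : SimpleGraph V} {b : V → ℤ}

lemma b_neg (hND : NegDef (imat G b)) (v : V) : b v < 0 := by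
  have h := hND (Pi.single v 1) (by
    intro h
    have := congrFun h v
    simp at this)
  rw [Matrix.mulVec_single, single_dotProduct] at h
  simp only [one_mul, mul_one] at h
  rw [show (MulOpposite.op (1:ℚ) • (imat G b).col v) v = imat G b v v by simp] at h
  have : imat G b v v = (b v : ℚ) := by simp [imat]
  rw [this] at h
  exact_mod_cast h

lemma isUnit_det (hND : NegDef (imat G b)) : IsUnit (imat G b).det := by
  rw [isUnit_iff_ne_zero]
  intro h
  obtain ⟨x, hx, hmx⟩ := (Matrix.exists_mulVec_eq_zero_iff).2 h
  have := hND x hx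
  rw [hmx] at this
  simp [dotProduct_zero] at this

lemma relation (hND : NegDef (imat G b)) (u : V) {j : V} (hj : j ≠ u) :
    (b u : ℚ) * Estar G b u j + ∑ t ∈ G.neighborFinset u, Estar G b t j = 0 := by
  have h1 : ((imat G b)⁻¹ * imat G b) j u = 0 := by
    rw [Matrix.nonsing_inv_mul _ (isUnit_det hND)]
    simp [Matrix.one_apply, hj]
  rw [Matrix.mul_apply] at h1
  have h2 : ∀ v : V, (imat G b)⁻¹ j v * imat G b v u
      = (if v = u then (imat G b)⁻¹ j u * (b u : ℚ) else 0)
        + (if v ∈ G.neighborFinset u then (imat G b)⁻¹ j v else 0) := by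
    intro v
    by_cases hv : v = u
    · subst hv
      simp [imat, SimpleGraph.irrefl]
    · rw [if_neg hv]
      by_cases hadj : G.Adj v u
      · rw [if_pos (by rwa [SimpleGraph.mem_neighborFinset, G.adj_comm])]
        simp [imat, hv, hadj]
      · rw [if_neg (by rwa [SimpleGraph.mem_neighborFinset, G.adj_comm])]
        simp [imat, hv, hadj]
  rw [Finset.sum_congr rfl (fun v _ => h2 v), Finset.sum_add_distrib,
    Finset.sum_ite_eq' Finset.univ u, Finset.sum_ite_mem, Finset.univ_inter] at h1
  simp only [Finset.mem_univ, if_true] at h1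
  have : (b u : ℚ) * Estar G b u j + ∑ t ∈ G.neighborFinset u, Estar G b t j
      = -((imat G b)⁻¹ j u * (b u:ℚ) + ∑ v ∈ G.neighborFinset u, (imat G b)⁻¹ j v) := by
    simp only [Estar, neg_add, Finset.sum_neg_distrib]
    ring_nf
  rw [this, h1, neg_zero]

end AuxMatrix

section Main

variable {V : Type} [Fintype V] [DecidableEq V]
variable (G : SimpleGraph V) (b : V → ℤ) (J : Finset V)

abbrev Rng := AddMonoidAlgebra ℤ ({x // x ∈ J} → ℚ)

/-- projection to the J coordinates -/
def pj (y : V → ℚ) : {x // x ∈ J} → ℚ := fun j => y j.1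

def mv (v : V) : {x // x ∈ J} → ℚ := fun j => Estar G b v j.1

def fv (v : V) : Rng J := 1 - single (mv G b J v) 1

def gS (v : V) : Rng J := if 2 ≤ deg G v then fv G b J v ^ (deg G v - 2) else 1

def gL (v : V) : Rng J := if deg G v = 1 then fv G b J v else 1

def SuppOK (P : Rng J) : Prop :=
  ∀ a ∈ P.coeff.support, ∃ y : V → ℚ, memS' G b y ∧ a = fun j => y j.1

lemma memS'_zero : memS' G b 0 := ⟨0, by simp⟩

lemma memS'_add {y z : V → ℚ} (hy : memS' G b y) (hz : memS' G b z) : memS' G b (y + z) := by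
  obtain ⟨a1, rfl⟩ := hy; obtain ⟨a2, rfl⟩ := hz
  exact ⟨a1 + a2, by simp [add_smul, Finset.sum_add_distrib]⟩

lemma memS'_Estar (u : V) : memS' G b (Estar G b u) := by
  refine ⟨fun v => if v = u then 1 else 0, ?_⟩
  simp [ite_smul, Finset.sum_ite_eq']

lemma memS'_nsmul (k : ℕ) {y : V → ℚ} (hy : memS' G b y) : memS' G b ((k:ℚ) • y) := by
  obtain ⟨a, rfl⟩ := hy
  refine ⟨fun v => k * a v, ?_⟩
  rw [Finset.smul_sum]
  simp [mul_smul]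

lemma suppOK_zero : SuppOK G b J 0 := by intro a ha; simp at ha

lemma suppOK_single {y : V → ℚ} (hy : memS' G b y) (c : ℤ) :
    SuppOK G b J (single (pj J y) c) := by
  intro a ha
  rcases Finset.mem_of_subset Finsupp.support_single_subset ha with h
  simp at h
  exact ⟨y, hy, h⟩

lemma suppOK_one : SuppOK G b J 1 := by
  have := suppOK_single G b J (memS'_zero G b) 1
  rwa [show pj J 0 = 0 from rfl, ← AddMonoidAlgebra.one_def] at this

lemma suppOK_add {P Q : Rng J} (hP : SuppOK G b J P) (hQ : SuppOK G b J Q) :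
    SuppOK G b J (P + Q) := by
  intro a ha
  rcases Finset.mem_union.1 (Finsupp.support_add ha) with h | h
  exacts [hP a h, hQ a h]

lemma suppOK_neg {P : Rng J} (hP : SuppOK G b J P) : SuppOK G b J (-P) := by
  intro a ha; rw [AddMonoidAlgebra.coeff_neg, Finsupp.support_neg] at ha; exact hP a ha

lemma suppOK_sub {P Q : Rng J} (hP : SuppOK G b J P) (hQ : SuppOK G b J Q) :
    SuppOK G b J (P - Q) := by
  rw [sub_eq_add_neg]; exact suppOK_add G b J hP (suppOK_neg G b J hQ)

lemma suppOK_mul {P Q : Rng J} (hP : SuppOK G b J P) (hQ : SuppOK G b J Q) :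
    SuppOK G b J (P * Q) := by
  intro a ha
  have := AddMonoidAlgebra.support_coeff_mul_subset P Q ha
  rw [Finset.mem_add] at this
  obtain ⟨x, hx, z, hz, rfl⟩ := this
  obtain ⟨y1, hy1, rfl⟩ := hP x hx
  obtain ⟨y2, hy2, rfl⟩ := hQ z hz
  exact ⟨y1 + y2, memS'_add G b hy1 hy2, rfl⟩

lemma suppOK_prod {ι : Type*} (s : Finset ι) (F : ι → Rng J)
    (h : ∀ i ∈ s, SuppOK G b J (F i)) : SuppOK G b J (∏ i ∈ s, F i) := by
  classical
  induction s using Finset.induction_on with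
  | empty => simpa using suppOK_one G b J
  | insert _ _ hx ih =>
    rw [Finset.prod_insert hx]
    exact suppOK_mul G b J (h _ (Finset.mem_insert_self _ _))
      (ih fun i hi => h i (Finset.mem_insert_of_mem hi))

lemma suppOK_sum {ι : Type*} (s : Finset ι) (F : ι → Rng J)
    (h : ∀ i ∈ s, SuppOK G b J (F i)) : SuppOK G b J (∑ i ∈ s, F i) := by
  classical
  induction s using Finset.induction_on with
  | empty => simpa using suppOK_zero G b J
  | insert _ _ hx ih =>
    rw [Finset.sum_insert hx]
    exact suppOK_add G b J (h _ (Finset.mem_insert_self _ _))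
      (ih fun i hi => h i (Finset.mem_insert_of_mem hi))

lemma suppOK_single_mv (v : V) : SuppOK G b J (single (mv G b J v) 1) :=
  suppOK_single G b J (memS'_Estar G b v) 1

lemma suppOK_single_smul (v : V) (k : ℕ) : SuppOK G b J (single (k • mv G b J v) 1) := by
  have h : k • mv G b J v = pj J ((k:ℚ) • Estar G b v) := by
    funext j
    simp [pj, mv, nsmul_eq_mul]
  rw [h]
  exact suppOK_single G b J (memS'_nsmul G b k (memS'_Estar G b v)) 1

lemma suppOK_geom (v : V) (n : ℕ) :
    SuppOK G b J (∑ k ∈ Finset.range n, single (k • mv G b J v) 1) :=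
  suppOK_sum G b J _ _ (fun k _ => suppOK_single_smul G b J v k)

lemma mrel {G : SimpleGraph V} {b : V → ℤ} (hND : NegDef (imat G b)) (u : V) (hu : u ∉ J) :
    ∑ t ∈ G.neighborFinset u, mv G b J t = ((-(b u)).toNat) • mv G b J u := by
  funext j
  have hj : (j : V) ≠ u := fun h => hu (h ▸ j.2)
  have hrel := relation hND u hj
  have hb := b_neg hND u
  have hcast : (((-(b u)).toNat : ℕ) : ℚ) = -((b u : ℤ) : ℚ) := by
    have h2 : ((-(b u)).toNat : ℤ) = -(b u) := Int.toNat_of_nonneg (by omega)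
    have h3 := congrArg (fun z : ℤ => (z : ℚ)) h2
    push_cast at h3
    exact h3
  simp only [Finset.sum_apply, Pi.smul_apply, mv, smul_eq_mul, nsmul_eq_mul]
  rw [hcast]
  linarith [hrel]

def BSd (t u : V) : Rng J := ∏ v ∈ CF G t u, gS G b J v
def BLd (t u : V) : Rng J := ∏ v ∈ CF G t u, gL G b J v

lemma main_induction {G : SimpleGraph V} {b : V → ℤ} (hT : G.IsTree) (hND : NegDef (imat G b)) :
    ∀ n : ℕ, ∀ u w : V, G.Adj u w → (∀ j ∈ J, j ∉ CF G u w) → (CF G u w).card ≤ n →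
      (∃ P, SuppOK G b J P ∧
          fv G b J w * ∏ v ∈ CF G u w, gS G b J v = P * ∏ v ∈ CF G u w, gL G b J v) ∧
      (∃ Q, SuppOK G b J Q ∧
          fv G b J u * ∏ v ∈ CF G u w, gS G b J v = Q * ∏ v ∈ CF G u w, gL G b J v) := by
  intro n
  induction n with
  | zero =>
    intro u w huw hJu hc
    have : 0 < (CF G u w).card := Finset.card_pos.2 ⟨u, u_mem_CF⟩
    omega
  | succ n ih =>
    intro u w huw hJu hcard
    have huJ : u ∉ J := fun h => hJu u h u_mem_CF
    have hbu := b_neg hND u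
    have hmrel := mrel J hND u huJ
    have hw_mem : w ∈ G.neighborFinset u := (SimpleGraph.mem_neighborFinset G u w).2 huw
    have hwN' : w ∉ (G.neighborFinset u).erase w := Finset.notMem_erase _ _
    have hNF : insert w ((G.neighborFinset u).erase w) = G.neighborFinset u :=
      Finset.insert_erase hw_mem
    have hdegu : deg G u = ((G.neighborFinset u).erase w).card + 1 := by
      rw [deg_eq, ← Finset.card_erase_add_one hw_mem]
    by_cases hN : (G.neighborFinset u).erase w = ∅
    · -- leaf case
      have hnfu : G.neighborFinset u = {w} := by rw [← hNF, hN]; simp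
      have hdeg1 : deg G u = 1 := by rw [hdegu, hN]; simp
      have hCF : CF G u w = {u} := by
        rw [CF_decomp hT huw, hN]
        simp
      have hmw : mv G b J w = ((-(b u)).toNat) • mv G b J u := by
        rw [← hmrel, hnfu, Finset.sum_singleton]
      have hfw : fv G b J w = fv G b J u *
          ∑ k ∈ Finset.range ((-(b u)).toNat), single (k • mv G b J u) 1 := by
        rw [fv, hmw, geomA]
        rfl
      constructor
      · refine ⟨∑ k ∈ Finset.range ((-(b u)).toNat), single (k • mv G b J u) 1,
          suppOK_geom G b J u _, ?_⟩
        rw [hCF, Finset.prod_singleton, Finset.prod_singleton]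
        simp only [gS, gL]
        rw [if_neg (by omega), if_pos hdeg1, mul_one, hfw]
        ring
      · refine ⟨1, suppOK_one G b J, ?_⟩
        rw [hCF, Finset.prod_singleton, Finset.prod_singleton, one_mul]
        simp only [gS, gL]
        rw [if_neg (by omega), if_pos hdeg1, mul_one]
    · -- branch case
      have hne : ((G.neighborFinset u).erase w).Nonempty := Finset.nonempty_of_ne_empty hN
      have hr : 1 ≤ ((G.neighborFinset u).erase w).card := Finset.card_pos.2 hne
      have hdegu2 : 2 ≤ deg G u := by omega
      have hadj_t : ∀ t ∈ (G.neighborFinset u).erase w, G.Adj u t := fun t ht =>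
        (SimpleGraph.mem_neighborFinset G u t).1 (Finset.mem_of_mem_erase ht)
      have htw : ∀ t ∈ (G.neighborFinset u).erase w, t ≠ w := fun t ht =>
        (Finset.mem_erase.1 ht).1
      have hchild : ∀ t : V, ∃ P Q : Rng J, t ∈ (G.neighborFinset u).erase w →
          (SuppOK G b J P ∧ fv G b J u * BSd G b J t u = P * BLd G b J t u) ∧
          (SuppOK G b J Q ∧ fv G b J t * BSd G b J t u = Q * BLd G b J t u) := by
        intro t
        by_cases ht : t ∈ (G.neighborFinset u).erase w
        · have hut := hadj_t t ht
          have hsub : CF G t u ⊆ CF G u w := CF_subset hT huw hut (htw t ht)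
          have hJt : ∀ j ∈ J, j ∉ CF G t u := fun j hj hjc => hJu j hj (hsub hjc)
          have hlt : (CF G t u).card ≤ n := by
            have hss : CF G t u ⊂ CF G u w :=
              (Finset.ssubset_iff_of_subset hsub).2 ⟨u, u_mem_CF, u_not_mem_CF hT hut⟩
            have := Finset.card_lt_card hss
            omega
          obtain ⟨⟨P, hP1, hP2⟩, ⟨Q, hQ1, hQ2⟩⟩ := ih t u hut.symm hJt hlt
          exact ⟨P, Q, fun _ => ⟨⟨hP1, hP2⟩, ⟨hQ1, hQ2⟩⟩⟩
        · exact ⟨1, 1, fun h => absurd h ht⟩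
      choose P Q hPQ using hchild
      have hPs : ∀ t ∈ (G.neighborFinset u).erase w, SuppOK G b J (P t) :=
        fun t ht => ((hPQ t ht).1).1
      have hPe : ∀ t ∈ (G.neighborFinset u).erase w,
          fv G b J u * BSd G b J t u = P t * BLd G b J t u := fun t ht => ((hPQ t ht).1).2
      have hQs : ∀ t ∈ (G.neighborFinset u).erase w, SuppOK G b J (Q t) :=
        fun t ht => ((hPQ t ht).2).1
      have hQe : ∀ t ∈ (G.neighborFinset u).erase w,
          fv G b J t * BSd G b J t u = Q t * BLd G b J t u := fun t ht => ((hPQ t ht).2).2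
      have hsplitS : ∏ v ∈ CF G u w, gS G b J v
          = gS G b J u * ∏ t ∈ (G.neighborFinset u).erase w, BSd G b J t u :=
        prod_CF_split hT huw _
      have hsplitL : ∏ v ∈ CF G u w, gL G b J v
          = gL G b J u * ∏ t ∈ (G.neighborFinset u).erase w, BLd G b J t u :=
        prod_CF_split hT huw _
      have hgSu : gS G b J u = fv G b J u ^ (((G.neighborFinset u).erase w).card - 1) := by
        have hd : deg G u - 2 = ((G.neighborFinset u).erase w).card - 1 := by omega
        simp only [gS, if_pos hdegu2, hd]
      have hgLu : gL G b J u = 1 := by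
        simp only [gL]
        rw [if_neg (by omega)]
      rw [hgLu, one_mul] at hsplitL
      have hcc : ((G.neighborFinset u).erase w).card - 1 + 1
          = ((G.neighborFinset u).erase w).card := by omega
      have hpow : fv G b J u * fv G b J u ^ (((G.neighborFinset u).erase w).card - 1)
          = fv G b J u ^ ((G.neighborFinset u).erase w).card := by
        conv_rhs => rw [← hcc]
        rw [pow_succ, mul_comm]
      have hkey : fv G b J u ^ ((G.neighborFinset u).erase w).card
            * ∏ t ∈ (G.neighborFinset u).erase w, BSd G b J t u
          = (∏ t ∈ (G.neighborFinset u).erase w, P t)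
            * ∏ t ∈ (G.neighborFinset u).erase w, BLd G b J t u := by
        rw [← Finset.prod_const, ← Finset.prod_mul_distrib, ← Finset.prod_mul_distrib]
        exact Finset.prod_congr rfl fun t ht => hPe t ht
      constructor
      · -- S-part
        obtain ⟨e, he, heq⟩ := onesub_sumA ((G.neighborFinset u).erase w) (fun t => mv G b J t)
        have hes : ∀ t ∈ (G.neighborFinset u).erase w, SuppOK G b J (e t) := by
          intro t ht
          obtain ⟨ts, hts, het⟩ := he t ht
          rw [het]
          exact suppOK_prod G b J _ _ fun i _ => suppOK_single_mv G b J i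
        have hsum_nf : mv G b J w + ∑ t ∈ (G.neighborFinset u).erase w, mv G b J t
            = ((-(b u)).toNat) • mv G b J u := by
          rw [← hmrel]
          conv_rhs => rw [← hNF]
          rw [Finset.sum_insert hwN']
        have hgeom : fv G b J u *
            (∑ k ∈ Finset.range ((-(b u)).toNat), single (k • mv G b J u) 1)
            = 1 - single (((-(b u)).toNat) • mv G b J u) 1 := (geomA _ _).symm
        have hfw : fv G b J w = fv G b J u *
            (∑ k ∈ Finset.range ((-(b u)).toNat), single (k • mv G b J u) 1)
            - single (mv G b J w) 1 * ∑ t ∈ (G.neighborFinset u).erase w, e t * fv G b J t := by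
          rw [hgeom, ← hsum_nf, onesub_addA, heq]
          simp only [fv]
          ring
        refine ⟨(∑ k ∈ Finset.range ((-(b u)).toNat), single (k • mv G b J u) 1)
              * ∏ t ∈ (G.neighborFinset u).erase w, P t
            - single (mv G b J w) 1 *
              ∑ t ∈ (G.neighborFinset u).erase w, e t * (Q t * ∏ s ∈ ((G.neighborFinset u).erase w).erase t, P s),
            ?_, ?_⟩
        · refine suppOK_sub G b J
            (suppOK_mul G b J (suppOK_geom G b J u _) (suppOK_prod G b J _ _ hPs))
            (suppOK_mul G b J (suppOK_single_mv G b J w) (suppOK_sum G b J _ _ ?_))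
          intro t ht
          exact suppOK_mul G b J (hes t ht) (suppOK_mul G b J (hQs t ht)
            (suppOK_prod G b J _ _ (fun s hs => hPs s (Finset.mem_of_mem_erase hs))))
        · rw [hsplitS, hgSu, hsplitL, hfw, sub_mul, sub_mul]
          refine congrArg₂ (· - ·) ?_ ?_
          · -- first term
            rw [mul_comm (fv G b J u), mul_assoc, ← mul_assoc (fv G b J u), hpow, hkey,
              ← mul_assoc]
          · -- second term
            rw [mul_assoc, mul_assoc]
            congr 1
            rw [Finset.sum_mul, Finset.sum_mul]
            refine Finset.sum_congr rfl fun t ht => ?_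
            have h1 : ∏ s ∈ (G.neighborFinset u).erase w, BSd G b J s u
                = BSd G b J t u * ∏ s ∈ ((G.neighborFinset u).erase w).erase t, BSd G b J s u :=
              (Finset.mul_prod_erase _ _ ht).symm
            have h2 : ∏ s ∈ (G.neighborFinset u).erase w, BLd G b J s u
                = BLd G b J t u * ∏ s ∈ ((G.neighborFinset u).erase w).erase t, BLd G b J s u :=
              (Finset.mul_prod_erase _ _ ht).symm
            have h3 : fv G b J u ^ (((G.neighborFinset u).erase w).card - 1)
                = ∏ _s ∈ ((G.neighborFinset u).erase w).erase t, fv G b J u := by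
              rw [Finset.prod_const, Finset.card_erase_of_mem ht]
            have h4 : ∏ s ∈ ((G.neighborFinset u).erase w).erase t, (fv G b J u * BSd G b J s u)
                = ∏ s ∈ ((G.neighborFinset u).erase w).erase t, (P s * BLd G b J s u) :=
              Finset.prod_congr rfl fun s hs => hPe s (Finset.mem_of_mem_erase hs)
            rw [Finset.prod_mul_distrib, Finset.prod_mul_distrib] at h4
            have h5 := hQe t ht
            calc (e t * fv G b J t)
                  * (fv G b J u ^ (((G.neighborFinset u).erase w).card - 1)
                    * ∏ s ∈ (G.neighborFinset u).erase w, BSd G b J s u)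
                = e t * ((fv G b J t * BSd G b J t u)
                    * ((∏ _s ∈ ((G.neighborFinset u).erase w).erase t, fv G b J u)
                      * ∏ s ∈ ((G.neighborFinset u).erase w).erase t, BSd G b J s u)) := by
                  rw [h1, h3]; ring
              _ = e t * ((Q t * BLd G b J t u)
                    * ((∏ s ∈ ((G.neighborFinset u).erase w).erase t, P s)
                      * ∏ s ∈ ((G.neighborFinset u).erase w).erase t, BLd G b J s u)) := by
                  rw [h5, h4]
              _ = e t * (Q t * ∏ s ∈ ((G.neighborFinset u).erase w).erase t, P s)
                    * ∏ s ∈ (G.neighborFinset u).erase w, BLd G b J s u := by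
                  rw [h2]; ring
      · -- T-part
        refine ⟨∏ t ∈ (G.neighborFinset u).erase w, P t, suppOK_prod G b J _ _ hPs, ?_⟩
        rw [hsplitS, hgSu, hsplitL, ← mul_assoc, hpow, hkey]

end Main


/-- Lemma `redlaurent` of the paper. The two components of the tree with
the edge `v'v''` removed are described by reachability in `G.deleteEdges {s(v',v'')}`. -/
theorem statement7 {V : Type} [Fintype V] [DecidableEq V]
    (G : SimpleGraph V) (b : V → ℤ)
    (hT : G.IsTree) (hND : NegDef (imat G b))
    (v' v'' : V) (hadj : G.Adj v' v'')
    (J : Finset V) (hJne : J.Nonempty)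
    (hJ : ∀ j ∈ J, (G.deleteEdges {s(v', v'')}).Reachable j v'') :
    ∃ P : AddMonoidAlgebra ℤ ({x // x ∈ J} → ℚ),
      (∀ m ∈ P.coeff.support, ∃ y : V → ℚ, memS' G b y ∧ m = fun j => y j.1) ∧
      (1 - AddMonoidAlgebra.single (fun j : {x // x ∈ J} => Estar G b v'' j.1) (1 : ℤ)) *
        (∏ v ∈ Finset.univ.filter (fun v =>
            (G.deleteEdges {s(v', v'')}).Reachable v v' ∧ 2 ≤ deg G v),
          (1 - AddMonoidAlgebra.single (fun j : {x // x ∈ J} => Estar G b v j.1) (1 : ℤ))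
            ^ (deg G v - 2))
      = P * ∏ v ∈ Finset.univ.filter (fun v =>
            (G.deleteEdges {s(v', v'')}).Reachable v v' ∧ deg G v = 1),
          (1 - AddMonoidAlgebra.single (fun j : {x // x ∈ J} => Estar G b v j.1) (1 : ℤ)) := by
  have hJc : ∀ j ∈ J, j ∉ CF G v' v'' := by
    intro j hj hmem
    exact bridge_no_reach hT hadj ((mem_CF.1 hmem).symm.trans (hJ j hj))
  obtain ⟨⟨P, hPs, hPe⟩, -⟩ :=
    main_induction J hT hND (CF G v' v'').card v' v'' hadj hJc le_rfl
  refine ⟨P, hPs, ?_⟩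
  have e0 : (Finset.univ.filter (fun v =>
        (G.deleteEdges {s(v', v'')}).Reachable v v' ∧ 2 ≤ deg G v))
      = (CF G v' v'').filter (fun v => 2 ≤ deg G v) := (Finset.filter_filter _ _ _).symm
  have e1 : (Finset.univ.filter (fun v =>
        (G.deleteEdges {s(v', v'')}).Reachable v v' ∧ deg G v = 1))
      = (CF G v' v'').filter (fun v => deg G v = 1) := (Finset.filter_filter _ _ _).symm
  rw [e0, e1, Finset.prod_filter, Finset.prod_filter]
  simp only [gS, gL, fv, mv] at hPe
  exact hPe


end SWpaper
end
end

section
/- Every coordinate of every dual cycle E*_u is strictly positive; equivalently, all entries of the matrix −I^{−1} are strictly positive. -/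
open Classical

attribute [local instance 10] Classical.propDecidable

noncomputable section

namespace SWpaper

/-- all coordinates of every dual cycle `E*_u` are strictly positive. -/
theorem statement15 {V : Type} [Fintype V] [DecidableEq V]
    (G : SimpleGraph V) (b : V → ℤ)
    (hT : G.IsTree) (hND : NegDef (imat G b)) :
    ∀ u w : V, 0 < Estar G b u w := by
  intro u
  set M := imat G b with hM
  -- invertibility of M
  have hInv : IsUnit M.det := by
    rw [isUnit_iff_ne_zero]
    intro hdet
    obtain ⟨v, hv0, hv⟩ := Matrix.exists_mulVec_eq_zero_iff.mpr hdet
    have h := hND v hv0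
    rw [show (imat G b).mulVec v = 0 from hv] at h
    simp [dotProduct] at h
  set x : V → ℚ := Estar G b u with hx
  -- M x = -e_u
  have hIx : ∀ w, (∑ j, M w j * x j) = -(if w = u then 1 else 0) := by
    intro w
    have h1 : M * M⁻¹ = 1 := Matrix.mul_nonsing_inv _ hInv
    have h2 := congrFun (congrFun h1 w) u
    simp only [Matrix.mul_apply, Matrix.one_apply] at h2
    have : (∑ j, M w j * x j) = -(∑ j, M w j * M⁻¹ j u) := by
      rw [← Finset.sum_neg_distrib]
      refine Finset.sum_congr rfl fun j _ => ?_
      simp [hx, Estar, mul_neg, hM]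
    rw [this, h2]
  -- off-diagonal entries of M are nonnegative
  have hoff : ∀ w j, w ≠ j → 0 ≤ M w j := by
    intro w j h
    simp only [hM, imat, Matrix.of_apply, if_neg h]
    split_ifs <;> norm_num
  have hadj1 : ∀ w j, G.Adj w j → M w j = 1 := by
    intro w j h
    simp only [hM, imat, Matrix.of_apply, if_neg (G.ne_of_adj h), if_pos h]
  -- negative part of x
  set n : V → ℚ := fun w => max (-(x w)) 0 with hn
  have hnn : ∀ w, 0 ≤ n w := fun w => le_max_right _ _
  have hp : ∀ w, 0 ≤ x w + n w := by
    intro w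
    rcases le_total (x w) 0 with h | h
    · have : n w = -(x w) := max_eq_left (by linarith)
      rw [this]; linarith
    · have := hnn w; linarith
  have hnp : ∀ w, n w * (x w + n w) = 0 := by
    intro w
    rcases le_total (x w) 0 with h | h
    · have : n w = -(x w) := max_eq_left (by linarith)
      rw [this]; ring
    · have : n w = 0 := max_eq_right (by linarith)
      rw [this]; ring
  -- nᵀ M (x + n) ≥ 0
  have hq : 0 ≤ ∑ w, n w * (∑ j, M w j * (x j + n j)) := by
    apply Finset.sum_nonneg
    intro w _
    rw [Finset.mul_sum]
    apply Finset.sum_nonneg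
    intro j _
    by_cases h : w = j
    · subst h
      have : n w * (M w w * (x w + n w)) = M w w * (n w * (x w + n w)) := by ring
      rw [this, hnp w, mul_zero]
    · exact mul_nonneg (hnn w) (mul_nonneg (hoff w j h) (hp j))
  -- nᵀ M x = -(n u)
  have hq2 : (∑ w, n w * (∑ j, M w j * x j)) = -(n u) := by
    have : ∀ w, n w * (∑ j, M w j * x j) = -(if w = u then n w else 0) := by
      intro w
      rw [hIx w]
      split_ifs <;> ring
    rw [Finset.sum_congr rfl fun w _ => this w, Finset.sum_neg_distrib]
    simp [Finset.sum_ite_eq']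
  -- hence nᵀ M n ≥ 0, forcing n = 0
  have hsplit : ∀ w, (∑ j, M w j * (x j + n j)) = (∑ j, M w j * x j) + (∑ j, M w j * n j) := by
    intro w
    rw [← Finset.sum_add_distrib]
    refine Finset.sum_congr rfl fun j _ => by ring
  have hdotn : 0 ≤ ∑ w, n w * (∑ j, M w j * n j) := by
    have : (∑ w, n w * (∑ j, M w j * (x j + n j)))
        = (∑ w, n w * (∑ j, M w j * x j)) + (∑ w, n w * (∑ j, M w j * n j)) := by
      rw [← Finset.sum_add_distrib]
      refine Finset.sum_congr rfl fun w _ => by rw [hsplit w]; ring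
    rw [this, hq2] at hq
    have := hnn u
    linarith
  have hn0 : ∀ w, n w = 0 := by
    by_contra h
    push_neg at h
    obtain ⟨w, hw⟩ := h
    have hne : n ≠ 0 := fun h0 => hw (congrFun h0 w)
    have hlt := hND n hne
    have : dotProduct n ((imat G b).mulVec n) = ∑ w, n w * (∑ j, M w j * n j) := by
      simp [dotProduct, Matrix.mulVec, hM]
    rw [this] at hlt
    linarith
  have hxnn : ∀ w, 0 ≤ x w := by
    intro w
    have h1 : -(x w) ≤ n w := le_max_left _ _
    rw [hn0 w] at h1
    linarith
  -- strict positivity at u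
  have hxu : 0 < x u := by
    have h := hIx u
    rw [if_pos rfl] at h
    have h2 : M u u * x u + ∑ j ∈ Finset.univ.erase u, M u j * x j = -1 := by
      rw [← h]; exact Finset.add_sum_erase Finset.univ (fun j => M u j * x j) (Finset.mem_univ u)
    have hrest : 0 ≤ ∑ j ∈ Finset.univ.erase u, M u j * x j :=
      Finset.sum_nonneg fun j hj =>
        mul_nonneg (hoff u j (Ne.symm (Finset.ne_of_mem_erase hj))) (hxnn j)
    have hdiag : M u u * x u ≤ -1 := by linarith
    rcases lt_or_eq_of_le (hxnn u) with h1 | h1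
    · exact h1
    · exfalso; rw [← h1, mul_zero] at hdiag; linarith
  -- propagation of zeros along edges
  have hprop : ∀ w, x w = 0 → ∀ j, G.Adj w j → x j = 0 := by
    intro w hxw j hadjwj
    have hwu : w ≠ u := fun he => hxu.ne' (he ▸ hxw)
    have h := hIx w
    rw [if_neg hwu, neg_zero] at h
    have h2 : M w w * x w + ∑ j ∈ Finset.univ.erase w, M w j * x j = 0 := by
      rw [← h]; exact Finset.add_sum_erase Finset.univ (fun j => M w j * x j) (Finset.mem_univ w)
    have hsum' : ∑ j ∈ Finset.univ.erase w, M w j * x j = 0 := by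
      rw [hxw, mul_zero, zero_add] at h2
      exact h2
    have hall := (Finset.sum_eq_zero_iff_of_nonneg (fun j hj =>
      mul_nonneg (hoff w j (Ne.symm (Finset.ne_of_mem_erase hj))) (hxnn j))).mp hsum'
    have hj0 : M w j * x j = 0 :=
      hall j (Finset.mem_erase.mpr ⟨(G.ne_of_adj hadjwj).symm, Finset.mem_univ j⟩)
    rw [hadj1 w j hadjwj, one_mul] at hj0
    exact hj0
  -- walk induction
  have hwalk : ∀ a c : V, G.Walk a c → x a = 0 → x c = 0 := by
    intro a c p
    induction p with
    | nil => exact id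
    | cons h q ih => intro hxa; exact ih (hprop _ hxa _ h)
  intro w
  obtain ⟨p⟩ := hT.isConnected.preconnected w u
  exact lt_of_le_of_ne (hxnn w) (Ne.symm fun h => hxu.ne' (hwalk w u p h))

end SWpaper
end
end

section
/- Let J ⊆ V be nonempty and l' = ∑_{v∈J} a_v E*_v with all a_v ∈ ℤ_{>0}. If l'' ∈ S' satisfies l''_v ≥ l'_v for every v ∈ J, then l'' ≥ l' coordinatewise on all of V. Equivalently, for l'' ∈ S': if l'' ≱ l', then l''_v < l'_v for some v ∈ J. -/
open Classical

attribute [local instance 10] Classical.propDecidable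

noncomputable section

namespace SWpaper

variable {V : Type} [Fintype V] [DecidableEq V]

lemma isUnit_det_of_negDef {M : Matrix V V ℚ} (h : NegDef M) : IsUnit M.det := by
  rw [isUnit_iff_ne_zero]
  intro hdet
  obtain ⟨v, hv0, hv⟩ := Matrix.exists_mulVec_eq_zero_iff.2 hdet
  have := h v hv0
  rw [hv] at this
  simp at this

lemma mulVec_Estar (G : SimpleGraph V) (b : V → ℤ) (hND : NegDef (imat G b)) (v : V) :
    (imat G b).mulVec (Estar G b v) = -Pi.single v 1 := by
  have h1 : Estar G b v = -((imat G b)⁻¹.mulVec (Pi.single v 1)) := by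
    funext u
    simp [Estar, Matrix.mulVec_single]
  rw [h1, Matrix.mulVec_neg, Matrix.mulVec_mulVec,
    Matrix.mul_nonsing_inv _ (isUnit_det_of_negDef hND), Matrix.one_mulVec]

lemma mulVec_comb (G : SimpleGraph V) (b : V → ℤ) (hND : NegDef (imat G b)) (c : V → ℚ) :
    (imat G b).mulVec (∑ v, c v • Estar G b v) = fun w => -c w := by
  have : (imat G b).mulVec (∑ v, c v • Estar G b v)
      = ∑ v, c v • ((imat G b).mulVec (Estar G b v)) := by
    simp only [← Matrix.mulVecLin_apply, map_sum, map_smul]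
  rw [this]
  funext w
  simp only [mulVec_Estar G b hND, Finset.sum_apply, Pi.smul_apply, Pi.neg_apply, smul_eq_mul,
    mul_neg]
  rw [Finset.sum_eq_single w]
  · simp
  · intro v _ hv
    simp [Pi.single_eq_of_ne (Ne.symm hv)]
  · simp


/-- if `l' = ∑_{v∈J} a_v E*_v` with all `a_v > 0` and `l'' ∈ S'`
dominates `l'` on `J`, then `l'' ≥ l'` everywhere. -/
theorem statement17 {V : Type} [Fintype V] [DecidableEq V]
    (G : SimpleGraph V) (b : V → ℤ)
    (hT : G.IsTree) (hND : NegDef (imat G b))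
    (J : Finset V) (hJ : J.Nonempty) (a : V → ℕ) (ha : ∀ v ∈ J, 0 < a v)
    (y : V → ℚ) (hy : memS' G b y)
    (h : ∀ v ∈ J, (∑ w ∈ J, (a w : ℚ) • Estar G b w) v ≤ y v) :
    (∑ w ∈ J, (a w : ℚ) • Estar G b w) ≤ y := by
  obtain ⟨a'', ha''⟩ := hy
  set l' : V → ℚ := ∑ w ∈ J, (a w : ℚ) • Estar G b w with hl'
  set x : V → ℚ := y - l' with hx
  set c : V → ℚ := fun v => (a'' v : ℚ) - (if v ∈ J then (a v : ℚ) else 0) with hc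
  have hxc : x = ∑ v, c v • Estar G b v := by
    have hl'2 : l' = ∑ w, (if w ∈ J then (a w : ℚ) else 0) • Estar G b w := by
      rw [hl']
      symm
      simp only [ite_smul, zero_smul]
      rw [Finset.sum_ite_mem, Finset.univ_inter]
    rw [hx, ha'', hl'2, ← Finset.sum_sub_distrib]
    congr 1
    funext v
    rw [hc, sub_smul]
  have hMx : (imat G b).mulVec x = fun w => -c w := hxc ▸ mulVec_comb G b hND c
  -- x ≥ 0 on J
  have hxJ : ∀ v ∈ J, 0 ≤ x v := fun v hv => by
    simp only [hx, Pi.sub_apply]; linarith [h v hv]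
  -- negative part
  set xm : V → ℚ := fun v => if x v < 0 then x v else 0 with hxm
  have hxm0 : xm = 0 := by
    by_contra hne
    have hS : 0 ≤ dotProduct xm ((imat G b).mulVec xm) := by
      rw [dotProduct]
      apply Finset.sum_nonneg
      intro u _
      by_cases hu : x u < 0
      · have hxmu : xm u = x u := if_pos hu
        -- u ∉ J
        have huJ : u ∉ J := fun huJ => absurd (hxJ u huJ) (not_le.2 hu)
        -- c u ≥ 0
        have hcu : 0 ≤ c u := by
          rw [hc]; simp [huJ]
        -- mulVec xm u ≤ 0
        have key : (imat G b).mulVec xm u ≤ 0 := by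
          have hsub : (imat G b).mulVec (x - xm) u
              = (imat G b).mulVec x u - (imat G b).mulVec xm u := by
            rw [Matrix.mulVec_sub]; rfl
          have h1 : (imat G b).mulVec x u ≤ 0 := by
            rw [hMx]; simpa using hcu
          have h2 : 0 ≤ (imat G b).mulVec (x - xm) u := by
            simp only [Matrix.mulVec, dotProduct]
            apply Finset.sum_nonneg
            intro v _
            by_cases hvu : v = u
            · subst hvu
              have : xm v = x v := if_pos hu
              simp [this]
            · have h3 : 0 ≤ imat G b u v := by
                simp only [imat, Matrix.of_apply]
                rw [if_neg (fun h => hvu h.symm)]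
                split <;> norm_num
              have h4 : 0 ≤ (x - xm) v := by
                simp only [Pi.sub_apply, hxm]
                split
                · simp
                · push_neg at *; linarith
              exact mul_nonneg h3 h4
          linarith
        rw [hxmu]
        nlinarith [key, hu]
      · have : xm u = 0 := if_neg hu
        rw [this, zero_mul]
    exact absurd (hND xm hne) (not_lt.2 hS)
  -- conclude
  intro v
  by_contra hlt
  push_neg at hlt
  have hxv : x v < 0 := by rw [hx]; simp; linarith
  have : xm v = x v := if_pos hxv
  rw [hxm0] at this
  simp at this
  linarith


end SWpaper
end
end
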